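/- Let a ∈ ℝ, e ∈ ℝ. As b → +∞, the complex number Δ(b) = (a + ib)² + e has a square root α(b) + iβ(b) with β(b) > 0 satisfying β(b) = b − e/(2b) + O(1/b²). In particular, β(b) − b = −e/(2b) + O(1/b²) and b·(β(b) − b) → −e/2. -/

import Mathlib

open Complex Filter Asymptotics

noncomputable def rrX (a e b : ℝ) : ℝ := Real.sqrt ((a^2 - b^2 + e)^2 + (2*a*b)^2)
noncomputable def betX (a e b : ℝ) : ℝ := Real.sqrt ((rrX a e b - (a^2 - b^2 + e))/2)
noncomputable def alpX (a e b : ℝ) : ℝ := a*b / betX a e b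

lemma rrX_nonneg (a e b : ℝ) : 0 ≤ rrX a e b := Real.sqrt_nonneg _

lemma rrX_sq (a e b : ℝ) : (rrX a e b)^2 = (a^2 - b^2 + e)^2 + (2*a*b)^2 :=
  Real.sq_sqrt (by positivity)

lemma rrX_ge (a e b : ℝ) : -(a^2 - b^2 + e) ≤ rrX a e b := by
  have h1 : |a^2 - b^2 + e| ≤ rrX a e b := by
    rw [← Real.sqrt_sq_eq_abs]
    exact Real.sqrt_le_sqrt (by nlinarith [sq_nonneg (2*a*b)])
  linarith [neg_abs_le (a^2 - b^2 + e)]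

lemma rrX_ge' (a e b : ℝ) : (a^2 - b^2 + e) ≤ rrX a e b := by
  have h1 : |a^2 - b^2 + e| ≤ rrX a e b := by
    rw [← Real.sqrt_sq_eq_abs]
    exact Real.sqrt_le_sqrt (by nlinarith [sq_nonneg (2*a*b)])
  linarith [le_abs_self (a^2 - b^2 + e)]

lemma betX_sq (a e b : ℝ) : (betX a e b)^2 = (rrX a e b - (a^2 - b^2 + e))/2 :=
  Real.sq_sqrt (by linarith [rrX_ge' a e b])

lemma betX_nonneg (a e b : ℝ) : 0 ≤ betX a e b := Real.sqrt_nonneg _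

lemma betX_pos (a e b : ℝ) (h : a^2 - b^2 + e < 0) : 0 < betX a e b := by
  apply Real.sqrt_pos.2
  have := rrX_ge a e b
  linarith

set_option maxHeartbeats 2000000 in
theorem stmt_9 (a e : ℝ) :
    ∃ α β : ℝ → ℝ,
      (∀ᶠ b in atTop, ((α b : ℂ) + β b * Complex.I) ^ 2
          = ((a : ℂ) + b * Complex.I) ^ 2 + e ∧ 0 < β b) ∧
      (fun b : ℝ => β b - (b - e / (2 * b))) =O[atTop] (fun b : ℝ => 1 / b ^ 2) ∧
      Tendsto (fun b : ℝ => b * (β b - b)) atTop (nhds (-e / 2)) := by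
  set B : ℝ := |a| + |e| + 2 with hB
  have hBmem : ∀ b : ℝ, B ≤ b → a^2 - b^2 + e < 0 ∧ 2 ≤ b := by
    intro b hb
    have h1 : 0 ≤ |a| := abs_nonneg a
    have h2 : 0 ≤ |e| := abs_nonneg e
    have ha : a ≤ |a| := le_abs_self a
    have ha' : -|a| ≤ a := neg_abs_le a
    have he : e ≤ |e| := le_abs_self e
    constructor
    · nlinarith
    · linarith
  have hO : (fun b : ℝ => betX a e b - (b - e / (2 * b))) =O[atTop] (fun b : ℝ => 1 / b ^ 2) := by
    rw [isBigO_iff]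
    refine ⟨4*a^2*|e| + 2*e^2 + 1, ?_⟩
    filter_upwards [eventually_ge_atTop B] with b hb
    obtain ⟨hx, hb2⟩ := hBmem b hb
    have hbp := betX_pos a e b hx
    have hbsq := betX_sq a e b
    have hrsq := rrX_sq a e b
    have hrnn := rrX_nonneg a e b
    have hbpos : (0:ℝ) < b := by linarith
    have hbne : b ≠ 0 := ne_of_gt hbpos
    have habs : |e| + 2 ≤ b := by
      have := abs_nonneg a; rw [hB] at hb; linarith
    have hae : -|e| ≤ e ∧ e ≤ |e| := ⟨neg_abs_le e, le_abs_self e⟩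
    -- g = b - e/(2b)
    set g : ℝ := b - e / (2*b) with hg
    set t : ℝ := b^2 + a^2 - e with ht
    clear_value g t
    -- key identity
    have hkey : (rrX a e b - t) * (rrX a e b + t) = 4*a^2*e := by
      rw [ht]; nlinarith [hrsq]
    have hdenom : b^2 ≤ rrX a e b + t := by
      have := rrX_ge a e b
      rw [ht]; nlinarith [hae.2]
    have hdpos : 0 < rrX a e b + t := lt_of_lt_of_le (by positivity) hdenom
    -- |rr - t| ≤ 4 a² |e| / b²
    have hrt : |rrX a e b - t| ≤ 4*a^2*|e| / b^2 := by
      rw [le_div_iff₀ (by positivity : (0:ℝ) < b^2)]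
      have h1 : |rrX a e b - t| * (rrX a e b + t) = |4*a^2*e| := by
        rw [← hkey, abs_mul, _root_.abs_of_pos hdpos]
      have h2 : |(4:ℝ)*a^2*e| = 4*a^2*|e| := by
        rw [abs_mul]
        congr 1
        rw [_root_.abs_of_nonneg (by positivity)]
      nlinarith [abs_nonneg (rrX a e b - t), hdenom, h1, h2]
    -- β² - g²
    have hg2 : g^2 = b^2 - e + e^2/(4*b^2) := by
      rw [hg]; field_simp; ring
    have hbg2 : (betX a e b)^2 - g^2 = (rrX a e b - t)/2 - e^2/(4*b^2) := by
      rw [hbsq, hg2, ht]; ring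
    have hbg2abs : |(betX a e b)^2 - g^2| ≤ (2*a^2*|e| + e^2) / b^2 := by
      rw [hbg2]
      calc |(rrX a e b - t)/2 - e^2/(4*b^2)|
          ≤ |(rrX a e b - t)/2| + |e^2/(4*b^2)| := abs_sub _ _
        _ ≤ (2*a^2*|e|)/b^2 + e^2/(4*b^2) := by
            gcongr ?_ + ?_
            · rw [abs_div, _root_.abs_of_nonneg (by norm_num : (0:ℝ) ≤ 2)]
              have h3 : (2*a^2*|e|)/b^2 = (4*a^2*|e|/b^2)/2 := by ring
              rw [h3]
              linarith [hrt]
            · rw [_root_.abs_of_nonneg (by positivity : (0:ℝ) ≤ e^2/(4*b^2))]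
        _ ≤ (2*a^2*|e| + e^2) / b^2 := by
            have h4 : (2*a^2*|e| + e^2)/b^2 - ((2*a^2*|e|)/b^2 + e^2/(4*b^2))
                = (3*e^2)/(4*b^2) := by field_simp; ring
            have h5 : (0:ℝ) ≤ (3*e^2)/(4*b^2) := by positivity
            linarith
    -- β + g ≥ b/2
    have hgb : b - 1 ≤ g := by
      rw [hg]
      have h1 : e / (2*b) ≤ 1 := by
        rw [div_le_one (by positivity)]
        nlinarith [hae.2]
      linarith
    have hsum : b/2 ≤ betX a e b + g := by
      have h0 := betX_nonneg a e b
      nlinarith [h0, hgb, hb2]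
    have hsumpos : 0 < betX a e b + g := lt_of_lt_of_le (by positivity) hsum
    -- final bound
    have hfin : |betX a e b - g| ≤ (4*a^2*|e| + 2*e^2) / b^3 := by
      have h1 : |betX a e b - g| * (betX a e b + g) = |(betX a e b)^2 - g^2| := by
        rw [← _root_.abs_of_pos hsumpos, ← abs_mul]
        congr 1; ring
      rw [le_div_iff₀ (by positivity : (0:ℝ) < b^3)]
      calc |betX a e b - g| * b^3 = (|betX a e b - g| * (b/2)) * (2*b^2) := by ring
        _ ≤ (|betX a e b - g| * (betX a e b + g)) * (2*b^2) := by
            gcongr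
        _ = |(betX a e b)^2 - g^2| * (2*b^2) := by rw [h1]
        _ ≤ ((2*a^2*|e| + e^2) / b^2) * (2*b^2) := by
            gcongr
        _ = 4*a^2*|e| + 2*e^2 := by field_simp; ring
    have hb1 : (1:ℝ) ≤ b := by linarith
    rw [Real.norm_eq_abs, Real.norm_eq_abs]
    have : |1 / b^2| = 1/b^2 := abs_of_pos (by positivity)
    rw [this]
    calc |betX a e b - g| ≤ (4*a^2*|e| + 2*e^2) / b^3 := hfin
      _ ≤ (4*a^2*|e| + 2*e^2 + 1) / b^2 := by
          rw [div_le_div_iff₀ (by positivity) (by positivity)]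
          have hc : (0:ℝ) ≤ 4*a^2*|e| + 2*e^2 := by positivity
          have hkey2 : (0:ℝ) ≤ (4*a^2*|e| + 2*e^2) * b^2 * (b - 1) :=
            mul_nonneg (mul_nonneg hc (sq_nonneg b)) (by linarith)
          nlinarith [hkey2, pow_pos hbpos 3]
      _ = (4*a^2*|e| + 2*e^2 + 1) * (1/b^2) := by ring
  refine ⟨alpX a e, betX a e, ?_, hO, ?_⟩
  · filter_upwards [eventually_ge_atTop B] with b hb
    obtain ⟨hx, hb2⟩ := hBmem b hb
    have hbp := betX_pos a e b hx
    have hbsq := betX_sq a e b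
    have hrsq := rrX_sq a e b
    have hbne : betX a e b ≠ 0 := ne_of_gt hbp
    have h2 : alpX a e b * betX a e b = a * b := by
      rw [alpX]; field_simp
    have h1 : (alpX a e b)^2 - (betX a e b)^2 = a^2 - b^2 + e := by
      rw [alpX]
      field_simp
      nlinarith [sq_nonneg (betX a e b)]
    constructor
    · have : ((alpX a e b : ℂ) + (betX a e b) * Complex.I) ^ 2
          = (((alpX a e b)^2 - (betX a e b)^2 : ℝ) : ℂ)
            + ((2 * (alpX a e b * betX a e b) : ℝ) : ℂ) * Complex.I := by
        push_cast
        ring_nf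
        rw [Complex.I_sq]
        ring
      rw [this, h1, h2]
      have : ((a : ℂ) + b * Complex.I) ^ 2 + e
          = ((a^2 - b^2 + e : ℝ) : ℂ) + ((2 * (a * b) : ℝ) : ℂ) * Complex.I := by
        push_cast
        ring_nf
        rw [Complex.I_sq]
        ring
      rw [this]
    · exact hbp
  · have h1 : (fun b : ℝ => b * (betX a e b - (b - e/(2*b)))) =O[atTop]
        (fun b : ℝ => b * (1/b^2)) := (isBigO_refl (fun b : ℝ => b) atTop).mul hO
    have h2 : Tendsto (fun b : ℝ => b * (1/b^2)) atTop (nhds 0) := by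
      apply Tendsto.congr' _ tendsto_inv_atTop_zero
      filter_upwards [eventually_ne_atTop (0:ℝ)] with b hb
      field_simp
    have h0 : Tendsto (fun b : ℝ => b * (betX a e b - (b - e/(2*b)))) atTop (nhds 0) :=
      h1.trans_tendsto h2
    have h3 : Tendsto (fun b : ℝ => b * (betX a e b - (b - e/(2*b))) + (-(e/2)))
        atTop (nhds (0 + -(e/2))) := h0.add tendsto_const_nhds
    have h4 : Tendsto (fun b : ℝ => b * (betX a e b - b)) atTop (nhds (0 + -(e/2))) := by
      refine h3.congr' ?_
      filter_upwards [eventually_gt_atTop (0:ℝ)] with b hb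
      have hbne : b ≠ 0 := ne_of_gt hb
      field_simp
      ring
    have : (0:ℝ) + -(e/2) = -e/2 := by ring
    rwa [this] at h4
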